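/- (Proposition 6) Let R > 0 and let P be the exponential probability density P(ψ) = (1/R)·exp(−ψ/R) for ψ ≥ 0 (so the mean is μ_b = R). Then for every c_b ≥ 0, the expected billing cost satisfies B_exp(c_b) = (g_b − i_b)·R + i_b·c_b + (i_b + p_b)·R·exp(−c_b/R); the unique global minimizer of B_exp over [0, ∞) is c_b* = R·ln((i_b + p_b)/i_b); and the minimum value is B_exp(c_b*) = (g_b + i_b·ln((i_b + p_b)/i_b))·R. -/

import Mathlib

open MeasureTheory Set

/-- Expected billing cost
`B_exp(c) = μ_b·(g_b + p_b) − p_b·c + (i_b + p_b)·∫₀^c (c − ψ) P(ψ) dψ`. -/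
noncomputable def Bexp (P : ℝ → ℝ) (g_b i_b p_b μb c : ℝ) : ℝ :=
  μb * (g_b + p_b) - p_b * c + (i_b + p_b) * ∫ ψ in (0:ℝ)..c, (c - ψ) * P ψ

lemma integral_aux (R c : ℝ) (hR : 0 < R) :
    ∫ ψ in (0:ℝ)..c, (c - ψ) * ((1 / R) * Real.exp (-ψ / R))
      = c - R + R * Real.exp (-c / R) := by
  have h : ∀ ψ ∈ Set.uIcc (0:ℝ) c,
      HasDerivAt (fun t => (t + R - c) * Real.exp (-t / R))
        ((c - ψ) * ((1 / R) * Real.exp (-ψ / R))) ψ := by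
    intro ψ _
    have h1 : HasDerivAt (fun t : ℝ => t + R - c) 1 ψ := by
      simpa using (hasDerivAt_id ψ).add_const R |>.sub_const c
    have h2 : HasDerivAt (fun t : ℝ => Real.exp (-t / R)) ((-1 / R) * Real.exp (-ψ / R)) ψ := by
      have : HasDerivAt (fun t : ℝ => -t / R) (-1 / R) ψ := by
        simpa using ((hasDerivAt_id ψ).neg.div_const R)
      simpa [mul_comm] using this.exp
    have : HasDerivAt (fun t => (t + R - c) * Real.exp (-t / R)) _ ψ := h1.mul h2
    convert this using 1
    field_simp
    ring
  have hint : IntervalIntegrable (fun ψ => (c - ψ) * ((1 / R) * Real.exp (-ψ / R)))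
      volume 0 c := by
    apply Continuous.intervalIntegrable
    continuity
  rw [intervalIntegral.integral_eq_sub_of_hasDerivAt h hint]
  simp [Real.exp_zero]
  ring

lemma bexp_formula (R g_b i_b p_b c : ℝ) (hR : 0 < R) :
    Bexp (fun ψ => (1 / R) * Real.exp (-ψ / R)) g_b i_b p_b R c
      = (g_b - i_b) * R + i_b * c + (i_b + p_b) * R * Real.exp (-c / R) := by
  unfold Bexp
  rw [integral_aux R c hR]
  ring

/-- (Proposition 6) For the exponential density `P(ψ) = (1/R)·exp(−ψ/R)` on `[0,∞)`
(mean `μ_b = R`): for every `c_b ≥ 0`,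
`B_exp(c_b) = (g_b − i_b)·R + i_b·c_b + (i_b + p_b)·R·exp(−c_b/R)`; the unique global
minimizer of `B_exp` over `[0, ∞)` is `c_b* = R·ln((i_b + p_b)/i_b)`; and
`B_exp(c_b*) = (g_b + i_b·ln((i_b + p_b)/i_b))·R`. -/
theorem stmt_19 (R g_b i_b p_b : ℝ) (hR : 0 < R)
    (hgb : 0 < g_b) (hib : 0 < i_b) (hpb : 0 < p_b) :
    (∀ c_b : ℝ, 0 ≤ c_b →
      Bexp (fun ψ => (1 / R) * Real.exp (-ψ / R)) g_b i_b p_b R c_b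
        = (g_b - i_b) * R + i_b * c_b + (i_b + p_b) * R * Real.exp (-c_b / R)) ∧
    (0 ≤ R * Real.log ((i_b + p_b) / i_b) ∧
      ∀ c_b : ℝ, 0 ≤ c_b → c_b ≠ R * Real.log ((i_b + p_b) / i_b) →
        Bexp (fun ψ => (1 / R) * Real.exp (-ψ / R)) g_b i_b p_b R
            (R * Real.log ((i_b + p_b) / i_b))
          < Bexp (fun ψ => (1 / R) * Real.exp (-ψ / R)) g_b i_b p_b R c_b) ∧
    Bexp (fun ψ => (1 / R) * Real.exp (-ψ / R)) g_b i_b p_b R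
        (R * Real.log ((i_b + p_b) / i_b))
      = (g_b + i_b * Real.log ((i_b + p_b) / i_b)) * R := by
  set L := Real.log ((i_b + p_b) / i_b) with hL
  have hratio : (1:ℝ) ≤ (i_b + p_b) / i_b := by
    rw [le_div_iff₀ hib]; linarith
  have hLpos : 0 ≤ L := Real.log_nonneg hratio
  have hip : 0 < i_b + p_b := by linarith
  have hexpstar : Real.exp (-(R * L) / R) = i_b / (i_b + p_b) := by
    have : -(R * L) / R = -L := by field_simp [mul_comm]
    rw [this, ← Real.log_inv, Real.exp_log (by positivity), inv_div]
  -- value at the minimizer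
  have hval : Bexp (fun ψ => (1 / R) * Real.exp (-ψ / R)) g_b i_b p_b R (R * L)
      = (g_b + i_b * L) * R := by
    rw [bexp_formula _ _ _ _ _ hR, hexpstar]
    field_simp
    ring
  refine ⟨fun c _ => bexp_formula R g_b i_b p_b c hR,
    ⟨mul_nonneg hR.le hLpos, ?_⟩, hval⟩
  intro c hc hne
  rw [hval, bexp_formula _ _ _ _ _ hR]
  have ht : -((c - R * L) / R) ≠ 0 := by
    field_simp
    exact fun h => hne (by rcases div_eq_zero_iff.mp (neg_eq_zero.mp h) with h | h <;> [linarith; exact absurd h hR.ne'])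
  have hkey := Real.add_one_lt_exp ht
  have hexpc : Real.exp (-c / R)
      = (i_b / (i_b + p_b)) * Real.exp (-((c - R * L) / R)) := by
    rw [← hexpstar, ← Real.exp_add]
    congr 1
    field_simp
    ring
  rw [hexpc]
  have hE : 0 < Real.exp (-((c - R * L) / R)) := Real.exp_pos _
  set t := -((c - R * L) / R) with htdef
  have hct : c = R * L - R * t := by rw [htdef]; field_simp; ring
  rw [hct]
  have hpos : 0 < i_b * R * (Real.exp t - t - 1) :=
    mul_pos (mul_pos hib hR) (by linarith)
  have hfact : (i_b + p_b) * R * (i_b / (i_b + p_b) * Real.exp t)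
      = i_b * R * Real.exp t := by field_simp
  rw [hfact]
  nlinarith [hpos]
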